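/- (Kronecker's theorem) If P is a monic irreducible integer polynomial with P(0) ≠ 0 and all of its complex roots lie on or inside the unit circle, then every root of P is a root of unity. -/

import Mathlib

open Polynomial IntermediateField

lemma kronecker_aux_prod_le_one (s : Multiset ℂ) (h : ∀ z ∈ s, ‖z‖ ≤ 1) :
    (s.map (‖·‖)).prod ≤ 1 := by
  induction s using Multiset.induction with
  | empty => simp
  | cons a s ih =>
    rw [Multiset.map_cons, Multiset.prod_cons]
    have h1 : ‖a‖ ≤ 1 := h a (Multiset.mem_cons_self a s)
    have h2 : (s.map (‖·‖)).prod ≤ 1 := ih fun z hz => h z (Multiset.mem_cons_of_mem hz)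
    have h3 : 0 ≤ (s.map (‖·‖)).prod :=
      Multiset.prod_nonneg (by intro x hx; obtain ⟨z, _, rfl⟩ := Multiset.mem_map.mp hx
                               exact norm_nonneg _)
    exact mul_le_one₀ h1 h3 h2

theorem kronecker (P : Polynomial ℤ) (hP : P.Monic) (hirr : Irreducible P)
    (h0 : P.eval 0 ≠ 0)
    (h : ∀ θ ∈ (P.map (Int.castRingHom ℂ)).roots, ‖θ‖ ≤ 1) :
    ∀ θ ∈ (P.map (Int.castRingHom ℂ)).roots, ∃ m : ℕ, 1 ≤ m ∧ θ ^ m = 1 := by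
  classical
  set Q : Polynomial ℂ := P.map (Int.castRingHom ℂ) with hQ
  have hQm : Q.Monic := hP.map _
  -- product of |roots| = |P(0)| ≥ 1
  have hprodeq : Q = (Q.roots.map fun a => X - C a).prod :=
    (IsAlgClosed.splits Q).eq_prod_roots_of_monic hQm
  have heval0 : ‖(Q.eval 0)‖ = (Q.roots.map (‖·‖)).prod := by
    conv_lhs => rw [hprodeq]
    rw [eval_multiset_prod, Multiset.map_map,
      show ∀ m : Multiset ℂ, ‖m.prod‖ = (m.map (‖·‖)).prod from fun m => map_multiset_prod normHom m,
      Multiset.map_map]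
    congr 1
    apply Multiset.map_congr rfl
    intro a _
    simp [map_neg]
  have habs0 : (1 : ℝ) ≤ ‖(Q.eval 0)‖ := by
    have : Q.eval 0 = ((P.eval 0 : ℤ) : ℂ) := by
      rw [hQ, eval_zero_map]; rfl
    rw [this, Complex.norm_intCast]
    exact_mod_cast Int.one_le_abs h0
  -- every root has absolute value 1
  have habs : ∀ θ ∈ Q.roots, ‖θ‖ = 1 := by
    intro θ hθ
    refine le_antisymm (h θ hθ) ?_
    have herase : (1 : ℝ) ≤ ‖θ‖ * ((Q.roots.erase θ).map (‖·‖)).prod := by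
      rw [Multiset.prod_map_erase (f := (‖·‖)) hθ, ← heval0]; exact habs0
    have hle : ((Q.roots.erase θ).map (‖·‖)).prod ≤ 1 :=
      kronecker_aux_prod_le_one _ fun z hz => h z (Multiset.mem_of_mem_erase hz)
    calc (1 : ℝ) ≤ ‖θ‖ * ((Q.roots.erase θ).map (‖·‖)).prod := herase
      _ ≤ ‖θ‖ * 1 :=
          mul_le_mul_of_nonneg_left hle (norm_nonneg _)
      _ = ‖θ‖ := mul_one _
  intro θ hθ
  -- θ is an algebraic integer
  have hθroot : Q.eval θ = 0 := (mem_roots hQm.ne_zero).mp hθ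
  have hθint : IsIntegral ℤ θ := ⟨P, hP, by rwa [← eval_map]⟩
  have hθalg : IsIntegral ℚ θ := hθint.tower_top
  -- minpoly ℚ θ = P mapped to ℚ
  have hPQirr : Irreducible (P.map (Int.castRingHom ℚ)) :=
    (IsPrimitive.Int.irreducible_iff_irreducible_map_cast hP.isPrimitive).mp hirr
  have hmin : minpoly ℚ θ = P.map (Int.castRingHom ℚ) := by
    refine (minpoly.eq_of_irreducible_of_monic hPQirr ?_ (hP.map _)).symm
    rw [aeval_def, eval₂_map,
      show (algebraMap ℚ ℂ).comp (Int.castRingHom ℚ) = Int.castRingHom ℂ from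
        RingHom.ext (by simp), ← eval_map]
    exact hθroot
  -- work in the number field ℚ⟮θ⟯
  let K : IntermediateField ℚ ℂ := ℚ⟮θ⟯
  haveI : FiniteDimensional ℚ K := IntermediateField.adjoin.finiteDimensional hθalg
  haveI : NumberField K := ⟨⟩
  let x : K := IntermediateField.AdjoinSimple.gen ℚ θ
  have hxθ : (algebraMap K ℂ) x = θ := IntermediateField.AdjoinSimple.algebraMap_gen ℚ θ
  have hxint : IsIntegral ℤ x := by
    rwa [← isIntegral_algebraMap_iff (algebraMap K ℂ).injective, hxθ]
  have hconj : ∀ φ : K →+* ℂ, ‖φ x‖ = 1 := by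
    intro φ
    have hroot : Q.eval (φ x) = 0 := by
      have h1 : (Polynomial.aeval x) (minpoly ℚ x) = 0 := minpoly.aeval ℚ x
      have h2 : (Polynomial.aeval (φ.toRatAlgHom x)) (minpoly ℚ x) = 0 := by
        rw [aeval_algHom_apply, h1, map_zero]
      have h3 : minpoly ℚ x = P.map (Int.castRingHom ℚ) := by
        rw [show x = IntermediateField.AdjoinSimple.gen ℚ θ from rfl]
        exact (IntermediateField.minpoly_gen (F := ℚ) (α := θ)).trans hmin
      rw [h3, aeval_def, eval₂_map,
        show (algebraMap ℚ ℂ).comp (Int.castRingHom ℚ) = Int.castRingHom ℂ from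
          RingHom.ext (by simp), ← eval_map] at h2
      exact h2
    have : φ x ∈ Q.roots := (mem_roots hQm.ne_zero).mpr hroot
    simpa using habs _ this
  obtain ⟨n, hn, hxn⟩ := NumberField.Embeddings.pow_eq_one_of_norm_eq_one K ℂ hxint hconj
  refine ⟨n, hn, ?_⟩
  have := congrArg (algebraMap K ℂ) hxn
  rwa [map_pow, map_one, hxθ] at this
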